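/- arXiv:1204.5138 — 2 statements merged into one kernel-verified Lean document; each statement's English description precedes it below -/
import Mathlib

section
/- For each choice of sign, the quantum determinant of L^±(u) is a scalar operator: in End(V) ⊗ ℂ[u,z_1,…,z_n,h] one has Σ_{σ∈S_N} sgn(σ) · L^±_{1,σ(1)}(u) ∘ L^±_{2,σ(2)}(u−h) ∘ ⋯ ∘ L^±_{N,σ(N)}(u−(N−1)h) = ∏_{a=1}^{n}(u−z_a+h) · ∏_{p=1}^{N−1} ∏_{a=1}^{n}(u−ph−z_a) · id_V. (Equivalently, the quantum determinant series A_N^±(u) acts on V-valued functions as multiplication by ∏_{a=1}^{n}(1 + h/(u−z_a)).) -/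
open scoped BigOperators

noncomputable section

namespace GRTV

/-- The polynomial ring `ℂ[z_1,…,z_n,h,u]`. -/
abbrev R (n : ℕ) : Type := MvPolynomial (Fin n ⊕ Fin 2) ℂ

def z {n : ℕ} (i : Fin n) : R n := MvPolynomial.X (Sum.inl i)
def hvar {n : ℕ} : R n := MvPolynomial.X (Sum.inr 0)
def uvar {n : ℕ} : R n := MvPolynomial.X (Sum.inr 1)

/-- `V ⊗ ℂ[z,h,u]` in coordinates. -/
abbrev VV (n N : ℕ) : Type := (Fin n → Fin N) → R n

/-- `ℂ^N ⊗ V` (coefficients in `ℂ[z,h,u]`) in coordinates. -/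
abbrev W (n N : ℕ) : Type := (Fin N × (Fin n → Fin N)) → R n

/-- The factor `(w − z_a + h P^{(0,a)})` acting on `ℂ^N ⊗ V`. -/
def fac0 {n N : ℕ} (w : R n) (a : Fin n) (f : W n N) : W n N :=
  fun x => (w - z a) * f x + hvar * f (x.2 a, Function.update x.2 a x.1)

/-- `L^±(w)`: `L^+(w) = (w−z_n+hP^{(0,n)})⋯(w−z_1+hP^{(0,1)})` and
`L^−(w) = (w−z_1+hP^{(0,1)})⋯(w−z_n+hP^{(0,n)})`. -/
def Lop {n N : ℕ} (ε : Bool) (w : R n) : W n N → W n N :=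
  if ε then (List.finRange n).foldl (fun g a => fac0 w a ∘ g) id
  else (List.finRange n).foldr (fun a g => fac0 w a ∘ g) id

/-- The matrix entry `L_{i,j}(w) ∈ End(V)`: `L_{i,j} v = π_i (L (e_j ⊗ v))`. -/
def entry {n N : ℕ} (L : W n N → W n N) (i j : Fin N) (v : VV n N) : VV n N :=
  fun m => L (fun x => if x.1 = j then v x.2 else 0) (i, m)

variable {n N : ℕ}

abbrev U (n N : ℕ) : Type := ((Fin N → Fin N) × (Fin n → Fin N)) → R n

variable {n N : ℕ}

def Pq (p : Fin N) (a : Fin n) (F : U n N) : U n N := fun km =>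
  F (Function.update km.1 p (km.2 a), Function.update km.2 a (km.1 p))

def Fq (p : Fin N) (w : R n) (a : Fin n) (F : U n N) : U n N := fun km =>
  (w - z a) * F km + hvar * Pq p a F km

lemma Fq_comm {p q : Fin N} {a b : Fin n} (hpq : p ≠ q) (hab : a ≠ b)
    (w w' : R n) (F : U n N) :
    Fq p w a (Fq q w' b F) = Fq q w' b (Fq p w a F) := by
  funext km
  obtain ⟨k, m⟩ := km
  simp only [Fq, Pq]
  rw [Function.update_of_ne hpq.symm, Function.update_of_ne hpq,
      Function.update_of_ne hab.symm, Function.update_of_ne hab,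
      Function.update_comm hpq, Function.update_comm hab]
  ring

/-- spectral parameter of row `p`. -/
def wt (p : Fin N) : R n := uvar - ((p : ℕ) : R n) * hvar

def rowOp (p : Fin N) (w : R n) : List (Fin n) → U n N → U n N
  | [], F => F
  | a :: as, F => Fq p w a (rowOp p w as F)

def rowChain (as : List (Fin n)) : List (Fin N) → U n N → U n N
  | [], F => F
  | p :: ps, F => rowOp p (wt p) as (rowChain as ps F)

def colOp (a : Fin n) : List (Fin N) → U n N → U n N
  | [], F => F
  | p :: ps, F => Fq p (wt p) a (colOp a ps F)

def colChain (ps : List (Fin N)) : List (Fin n) → U n N → U n N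
  | [], F => F
  | a :: as, F => colOp a ps (colChain ps as F)

lemma Fq_rowOp_comm {p q : Fin N} {a : Fin n} (hpq : p ≠ q) (w w' : R n) :
    ∀ (as : List (Fin n)), a ∉ as → ∀ F,
      Fq p w a (rowOp q w' as F) = rowOp q w' as (Fq p w a F)
  | [], _, F => rfl
  | b :: as, ha, F => by
    have hab : a ≠ b := fun h => ha (h ▸ (List.mem_cons_self (a := b) (l := as)))
    simp only [rowOp]
    rw [Fq_comm hpq hab, Fq_rowOp_comm hpq w w' as (fun h => ha (List.mem_cons_of_mem b h)) F]

lemma Fq_colOp_comm {p : Fin N} {a b : Fin n} (hba : b ≠ a) (w : R n) :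
    ∀ (ps : List (Fin N)), p ∉ ps → ∀ F,
      Fq p w b (colOp a ps F) = colOp a ps (Fq p w b F)
  | [], _, F => rfl
  | q :: ps, hp, F => by
    have hpq : p ≠ q := fun h => hp (h ▸ (List.mem_cons_self (a := q) (l := ps)))
    simp only [colOp]
    rw [Fq_comm hpq hba (w := w) (w' := wt q), Fq_colOp_comm hba w ps (fun h => hp (List.mem_cons_of_mem q h)) F]

lemma rowOp_colOp_comm {p : Fin N} {a : Fin n} (w : R n) :
    ∀ (as : List (Fin n)) (ps : List (Fin N)), a ∉ as → p ∉ ps → ∀ F,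
      rowOp p w as (colOp a ps F) = colOp a ps (rowOp p w as F)
  | [], ps, _, _, F => rfl
  | b :: as, ps, ha, hp, F => by
    have hba : b ≠ a := fun h => ha (h ▸ (List.mem_cons_self (a := b) (l := as)))
    simp only [rowOp]
    rw [rowOp_colOp_comm w as ps (fun h => ha (List.mem_cons_of_mem b h)) hp F,
        Fq_colOp_comm hba w ps hp]

lemma rowChain_nil_sites : ∀ (ps : List (Fin N)) (F : U n N), rowChain ([] : List (Fin n)) ps F = F
  | [], F => rfl
  | p :: ps, F => by
    simp only [rowChain, rowOp]
    exact rowChain_nil_sites ps F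

lemma pull {a : Fin n} (as : List (Fin n)) (ha : a ∉ as) :
    ∀ (ps : List (Fin N)), ps.Nodup → ∀ F,
      rowChain (a :: as) ps F = colOp a ps (rowChain as ps F)
  | [], _, F => rfl
  | p :: ps, hnd, F => by
    have hp : p ∉ ps := (List.nodup_cons.mp hnd).1
    simp only [rowChain, colOp, rowOp]
    rw [pull as ha ps (List.nodup_cons.mp hnd).2 F]
    rw [rowOp_colOp_comm (wt p) as ps ha hp]

lemma rowChain_eq_colChain :
    ∀ (as : List (Fin n)) (ps : List (Fin N)), as.Nodup → ps.Nodup → ∀ F,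
      rowChain as ps F = colChain ps as F
  | [], ps, _, _, F => by
    simp only [colChain]
    exact rowChain_nil_sites ps F
  | a :: as, ps, hnd, hps, F => by
    simp only [colChain]
    rw [pull as (List.nodup_cons.mp hnd).1 ps hps F,
        rowChain_eq_colChain as ps (List.nodup_cons.mp hnd).2 hps F]

/-! ### Antisymmetric functions -/

def ASym (g : U n N) : Prop :=
  ∀ (τ : Equiv.Perm (Fin N)) (k : Fin N → Fin N) (m : Fin n → Fin N),
    g (k ∘ ⇑τ, m) = ((Equiv.Perm.sign τ : ℤ) : R n) * g (k, m)

lemma comp_swap (k : Fin N → Fin N) (i j : Fin N) :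
    k ∘ ⇑(Equiv.swap i j) = Function.update (Function.update k i (k j)) j (k i) := by
  funext x
  by_cases hxj : x = j
  · subst hxj
    simp [Equiv.swap_apply_right]
  · by_cases hxi : x = i
    · subst hxi
      rw [Function.comp_apply, Equiv.swap_apply_left, Function.update_of_ne hxj,
        Function.update_self]
    · rw [Function.comp_apply, Equiv.swap_apply_of_ne_of_ne hxi hxj,
        Function.update_of_ne hxj, Function.update_of_ne hxi]

lemma asym_swap {g : U n N} (hg : ASym g) {i j : Fin N} (hij : i ≠ j)
    (k : Fin N → Fin N) (m : Fin n → Fin N) :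
    g (Function.update (Function.update k i (k j)) j (k i), m) = - g (k, m) := by
  rw [← comp_swap, hg (Equiv.swap i j), Equiv.Perm.sign_swap hij]
  push_cast
  ring

lemma asym_dup {g : U n N} (hg : ASym g) {i j : Fin N} (hij : i ≠ j)
    {k : Fin N → Fin N} (hk : k i = k j) (m : Fin n → Fin N) :
    g (k, m) = 0 := by
  have h := asym_swap hg hij k m
  rw [← hk, Function.update_eq_self, hk, Function.update_eq_self] at h
  have h2 : (2 : R n) * g (k, m) = 0 := by linear_combination h
  rcases mul_eq_zero.mp h2 with h3 | h3
  · exact absurd h3 two_ne_zero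
  · exact h3

lemma asym_smul {g : U n N} (hg : ASym g) (c : R n) :
    ASym (fun km => c * g km) := by
  intro τ k m
  simp only
  rw [hg]
  ring

/-- `P^{(p,a)} P^{(q,a)} g = - P^{(q,a)} g` on antisymmetric `g`. -/
lemma Pq_Pq {g : U n N} (hg : ASym g) {p q : Fin N} (hpq : p ≠ q) (a : Fin n)
    (k : Fin N → Fin N) (m : Fin n → Fin N) :
    Pq p a (Pq q a g) (k, m) = - Pq q a g (k, m) := by
  simp only [Pq]
  rw [Function.update_self, Function.update_idem, Function.update_of_ne hpq.symm]
  -- goal: g (update (update k p (m a)) q (k p), update m a (k q)) = - g (update k q (m a), update m a (k q))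
  set A : Fin N → Fin N := Function.update (Function.update k p (m a)) q (k p) with hA
  have h1 : Function.update (Function.update A p (A q)) q (A p) = Function.update k q (m a) := by
    funext x
    by_cases hxq : x = q
    · subst hxq
      rw [Function.update_self, hA, Function.update_of_ne hpq, Function.update_self,
        Function.update_self]
    · rw [Function.update_of_ne hxq, Function.update_of_ne hxq]
      by_cases hxp : x = p
      · subst hxp
        rw [Function.update_self, hA, Function.update_self]
      · rw [Function.update_of_ne hxp, hA, Function.update_of_ne hxq,
          Function.update_of_ne hxp]
  have h2 := asym_swap hg hpq A (Function.update m a (k q))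
  rw [h1] at h2
  rw [← neg_neg (g (A, Function.update m a (k q))), ← h2]

/-- `Σ_q P^{(q,a)} g = g` on antisymmetric `g`. -/
lemma sum_Pq {g : U n N} (hg : ASym g) (a : Fin n)
    (k : Fin N → Fin N) (m : Fin n → Fin N) :
    (∑ q : Fin N, Pq q a g (k, m)) = g (k, m) := by
  by_cases hinj : Function.Injective k
  · obtain ⟨q0, hq0⟩ := (Finite.injective_iff_bijective.mp hinj).2 (m a)
    rw [Finset.sum_eq_single q0]
    · simp only [Pq]
      rw [← hq0, Function.update_eq_self, hq0, Function.update_eq_self]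
    · intro q _ hq
      refine asym_dup hg hq (k := Function.update k q (m a)) ?_ _
      rw [Function.update_self, Function.update_of_ne (Ne.symm hq), hq0]
    · intro h
      exact absurd (Finset.mem_univ q0) h
  · rw [Function.not_injective_iff] at hinj
    obtain ⟨i, j, hkij, hij⟩ := hinj
    rw [asym_dup hg hij hkij m]
    have hz : ∀ q ∈ Finset.univ, q ∉ ({i, j} : Finset (Fin N)) → Pq q a g (k, m) = 0 := by
      intro q _ hq
      simp only [Finset.mem_insert, Finset.mem_singleton, not_or] at hq
      refine asym_dup hg hij (k := Function.update k q (m a)) ?_ _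
      rw [Function.update_of_ne (Ne.symm hq.1), Function.update_of_ne (Ne.symm hq.2), hkij]
    rw [← Finset.sum_subset (Finset.subset_univ ({i, j} : Finset (Fin N)))
      (fun q hq hq2 => hz q hq hq2), Finset.sum_pair hij]
    -- Pq i a g (k,m) + Pq j a g (k,m) = 0
    simp only [Pq]
    have hm : Function.update m a (k i) = Function.update m a (k j) := by rw [hkij]
    rw [hm]
    set B : Fin N → Fin N := Function.update k i (m a) with hB
    have h1 : Function.update (Function.update B i (B j)) j (B i) = Function.update k j (m a) := by
      funext x
      simp only [hB, Function.update_apply]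
      by_cases hxj : x = j <;> by_cases hxi : x = i <;>
        simp [hxj, hxi, hij, Ne.symm hij, hkij]
    have h2 := asym_swap hg hij B (Function.update m a (k j))
    rw [h1] at h2
    rw [h2]
    ring

/-! ### tail lists and the single-site computation -/

def tailList (N : ℕ) (j : ℕ) : List (Fin N) :=
  if h : j < N then ⟨j, h⟩ :: tailList N (j + 1) else []
  termination_by N - j

lemma tailList_eq_drop (N : ℕ) (j : ℕ) : tailList N j = (List.finRange N).drop j := by
  rw [tailList]
  split
  · rename_i h
    rw [tailList_eq_drop N (j + 1)]
    rw [List.drop_eq_getElem_cons (i := j) (l := List.finRange N) (by rw [List.length_finRange]; exact h)]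
    congr 1
    rw [List.getElem_finRange]
    rfl
  · rename_i h
    rw [List.drop_eq_nil_of_le]
    rw [List.length_finRange]
    omega
  termination_by N - j

lemma tailList_zero (N : ℕ) : tailList N 0 = List.finRange N := by
  rw [tailList_eq_drop, List.drop_zero]

lemma tailList_nodup (N j : ℕ) : (tailList N j).Nodup := by
  rw [tailList_eq_drop]
  exact (List.drop_sublist j _).nodup (List.nodup_finRange N)

def tailSum (a : Fin n) (g : U n N) (j : ℕ) : U n N :=
  fun km => ∑ q ∈ Finset.univ.filter (fun q : Fin N => j ≤ (q : ℕ)), Pq q a g km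

lemma tailSum_ge {a : Fin n} {g : U n N} {j : ℕ} (hj : N ≤ j) (km) :
    tailSum a g j km = 0 := by
  rw [tailSum, Finset.sum_eq_zero]
  intro q hq
  rw [Finset.mem_filter] at hq
  exact absurd (lt_of_le_of_lt (le_trans hj hq.2) q.2) (lt_irrefl _)

lemma tailSum_succ {a : Fin n} {g : U n N} {j : ℕ} (hj : j < N) (km) :
    tailSum a g j km = Pq ⟨j, hj⟩ a g km + tailSum a g (j + 1) km := by
  rw [tailSum, tailSum]
  have hsplit : Finset.univ.filter (fun q : Fin N => j ≤ (q : ℕ)) =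
      insert ⟨j, hj⟩ (Finset.univ.filter (fun q : Fin N => j + 1 ≤ (q : ℕ))) := by
    ext q
    simp only [Finset.mem_filter, Finset.mem_insert, Finset.mem_univ, true_and]
    constructor
    · intro h
      rcases Nat.eq_or_lt_of_le h with h1 | h1
      · left; exact (Fin.ext h1.symm)
      · right; exact h1
    · rintro (h | h)
      · subst h; exact le_refl _
      · exact Nat.le_of_succ_le h
  rw [hsplit, Finset.sum_insert]
  simp only [Finset.mem_filter, Finset.mem_univ, true_and, not_le]
  exact Nat.lt_succ_self j

lemma tailSum_zero {a : Fin n} {g : U n N} (hg : ASym g) (k m) :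
    tailSum a g 0 (k, m) = g (k, m) := by
  rw [tailSum]
  rw [show Finset.univ.filter (fun q : Fin N => 0 ≤ (q : ℕ)) = Finset.univ by
    ext q; simp]
  exact sum_Pq hg a k m

lemma Pq_tailSum {a : Fin n} {g : U n N} (hg : ASym g) {p : Fin N} {j : ℕ}
    (hp : (p : ℕ) < j) (km) :
    Pq p a (tailSum a g j) km = - tailSum a g j km := by
  obtain ⟨k, m⟩ := km
  have : Pq p a (tailSum a g j) (k, m) =
      ∑ q ∈ Finset.univ.filter (fun q : Fin N => j ≤ (q : ℕ)), Pq p a (Pq q a g) (k, m) := rfl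
  rw [this, tailSum, ← Finset.sum_neg_distrib]
  refine Finset.sum_congr rfl fun q hq => ?_
  rw [Finset.mem_filter] at hq
  have hpq : p ≠ q := by
    intro h
    rw [h] at hp
    omega
  rw [Pq_Pq hg hpq a k m]

/-- The heart of the single-site computation. -/
lemma colOp_tail {a : Fin n} {g : U n N} (hg : ASym g) (j : ℕ) :
    ∀ km, colOp a (tailList N j) g km =
      (∏ p ∈ Finset.Ico j N, (uvar - (p : R n) * hvar - z a)) * g km
        + (hvar * ∏ p ∈ Finset.Ico (j + 1) N, (uvar - (p : R n) * hvar - z a)) *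
            tailSum a g j km := by
  intro km
  rw [tailList]
  split
  · rename_i hj
    obtain ⟨k, m⟩ := km
    have IH := colOp_tail (a := a) hg (j + 1)
    simp only [colOp, Fq]
    rw [IH (k, m)]
    have hPq : Pq ⟨j, hj⟩ a (colOp a (tailList N (j + 1)) g) (k, m) =
        (∏ p ∈ Finset.Ico (j + 1) N, (uvar - (p : R n) * hvar - z a)) *
            Pq ⟨j, hj⟩ a g (k, m)
          + (hvar * ∏ p ∈ Finset.Ico (j + 2) N, (uvar - (p : R n) * hvar - z a)) *
            Pq ⟨j, hj⟩ a (tailSum a g (j + 1)) (k, m) := by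
      show colOp a (tailList N (j + 1)) g _ = _
      rw [IH _]
      rfl
    rw [hPq, Pq_tailSum hg (by exact Nat.lt_succ_self j) (k, m),
      tailSum_succ hj (k, m)]
    rw [Finset.prod_eq_prod_Ico_succ_bot hj]
    have hwt : wt (⟨j, hj⟩ : Fin N) - z a = uvar - (j : R n) * hvar - z a := by
      rw [wt]
    rw [hwt]
    rcases Nat.lt_or_ge (j + 1) N with hj2 | hj2
    · rw [Finset.prod_eq_prod_Ico_succ_bot hj2]
      push_cast
      ring
    · rw [tailSum_ge hj2 (k, m)]
      ring
  · rename_i hj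
    simp only [colOp]
    rw [tailSum_ge (by omega) km]
    rw [Finset.Ico_eq_empty (by omega), Finset.prod_empty]
    ring
  termination_by N - j

def dA (N : ℕ) {n : ℕ} (a : Fin n) : R n :=
  (uvar - z a + hvar) * ∏ p ∈ Finset.Ico 1 N, (uvar - (p : R n) * hvar - z a)

lemma colOp_full {a : Fin n} {g : U n N} (hg : ASym g) (hN : 0 < N) :
    colOp a (tailList N 0) g = fun km => dA N a * g km := by
  funext km
  obtain ⟨k, m⟩ := km
  rw [colOp_tail hg 0 (k, m), tailSum_zero hg k m,
    Finset.prod_eq_prod_Ico_succ_bot hN, dA]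
  push_cast
  ring

lemma colOp_smul (a : Fin n) (c : R n) :
    ∀ (ps : List (Fin N)) (g : U n N),
      colOp a ps (fun km => c * g km) = fun km => c * colOp a ps g km
  | [], g => rfl
  | p :: ps, g => by
    simp only [colOp]
    rw [colOp_smul a c ps g]
    funext km
    simp only [Fq, Pq]
    ring

lemma colChain_eval (hN : 0 < N) {g : U n N} (hg : ASym g) :
    ∀ as : List (Fin n),
      colChain (tailList N 0) as g = fun km => (as.map (dA N)).prod * g km
  | [] => by
    funext km
    simp only [colChain, List.map_nil, List.prod_nil, one_mul]
  | a :: as => by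
    simp only [colChain]
    rw [colChain_eval hN hg as, colOp_smul a _ (tailList N 0) g, colOp_full hg hN]
    funext km
    simp only [List.map_cons, List.prod_cons]
    ring


/-! ### bridge between `entry`/`Lop` chains and big-space operators -/

def siteList (n : ℕ) (ε : Bool) : List (Fin n) :=
  if ε then (List.finRange n).reverse else List.finRange n

lemma siteList_nodup (n : ℕ) (ε : Bool) : (siteList n ε).Nodup := by
  cases ε <;> simp [siteList, List.nodup_reverse, List.nodup_finRange]

lemma lop_eq (ε : Bool) (w : R n) (f : W n N) :
    Lop ε w f = (siteList n ε).foldr (fun a g => fac0 w a ∘ g) id f := by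
  cases ε
  · rfl
  · show Lop true w f = _
    rw [Lop, if_pos rfl, siteList, if_pos rfl, List.foldr_reverse]

lemma rowOp_eval (p : Fin N) (w : R n) :
    ∀ (as : List (Fin n)) (F : U n N) (k : Fin N → Fin N) (m : Fin n → Fin N),
      rowOp p w as F (k, m) =
        (as.foldr (fun a g => fac0 w a ∘ g) id)
          (fun x => F (Function.update k p x.1, x.2)) (k p, m)
  | [], F, k, m => by
    simp only [rowOp, List.foldr_nil, id_eq, Function.update_eq_self]
  | a :: as, F, k, m => by
    simp only [rowOp, List.foldr_cons, Function.comp_apply, fac0, Fq, Pq]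
    rw [rowOp_eval p w as, rowOp_eval p w as]
    simp only [Function.update_self, Function.update_idem]

lemma Fq_unaff {q p : Fin N} (hqp : q ≠ p) (w : R n) (b : Fin n) (F : U n N)
    (k : Fin N → Fin N) (i : Fin N) (m : Fin n → Fin N) :
    Fq q w b F (Function.update k p i, m) =
      Fq q w b (fun km => F (Function.update km.1 p i, km.2)) (k, m) := by
  simp only [Fq, Pq]
  rw [Function.update_of_ne hqp, Function.update_comm hqp.symm]

lemma rowOp_unaff {q p : Fin N} (hqp : q ≠ p) (w : R n) :
    ∀ (as : List (Fin n)) (F : U n N) (k : Fin N → Fin N) (i : Fin N) (m : Fin n → Fin N),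
      rowOp q w as F (Function.update k p i, m) =
        rowOp q w as (fun km => F (Function.update km.1 p i, km.2)) (k, m)
  | [], F, k, i, m => rfl
  | a :: as, F, k, i, m => by
    simp only [rowOp]
    rw [Fq_unaff hqp]
    have hfun : (fun km => rowOp q w as F (Function.update km.1 p i, km.2)) =
        (fun km : (Fin N → Fin N) × (Fin n → Fin N) =>
          rowOp q w as (fun km' => F (Function.update km'.1 p i, km'.2)) km) := by
      funext km
      exact rowOp_unaff hqp w as F km.1 i km.2
    rw [hfun]

lemma rowChain_unaff {p : Fin N} (as : List (Fin n)) :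
    ∀ (ps : List (Fin N)), p ∉ ps →
      ∀ (F : U n N) (k : Fin N → Fin N) (i : Fin N) (m : Fin n → Fin N),
        rowChain as ps F (Function.update k p i, m) =
          rowChain as ps (fun km => F (Function.update km.1 p i, km.2)) (k, m)
  | [], _, F, k, i, m => rfl
  | q :: ps, hp, F, k, i, m => by
    have hqp : q ≠ p := fun h => hp (h ▸ (List.mem_cons_self (a := q) (l := ps)))
    have hp' : p ∉ ps := fun h => hp (List.mem_cons_of_mem q h)
    simp only [rowChain]
    rw [rowOp_unaff hqp]
    have hfun : (fun km => rowChain as ps F (Function.update km.1 p i, km.2)) =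
        (fun km : (Fin N → Fin N) × (Fin n → Fin N) =>
          rowChain as ps (fun km' => F (Function.update km'.1 p i, km'.2)) km) := by
      funext km
      exact rowChain_unaff as ps hp' F km.1 i km.2
    rw [hfun]

lemma Fq_del {q p : Fin N} (hqp : q ≠ p) (w : R n) (b : Fin n) (s : Fin N) (F : U n N) :
    Fq q w b (fun km => if km.1 p = s then F km else 0) =
      fun km => if km.1 p = s then Fq q w b F km else 0 := by
  funext km
  simp only [Fq, Pq]
  simp only [Function.update_of_ne hqp.symm]
  by_cases h : km.1 p = s
  · simp only [h, if_true]
  · simp only [h, if_false, mul_zero, add_zero]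

lemma rowOp_del {q p : Fin N} (hqp : q ≠ p) (w : R n) (s : Fin N) :
    ∀ (as : List (Fin n)) (F : U n N),
      rowOp q w as (fun km => if km.1 p = s then F km else 0) =
        fun km => if km.1 p = s then rowOp q w as F km else 0
  | [], F => rfl
  | a :: as, F => by
    simp only [rowOp]
    rw [rowOp_del hqp w s as F, Fq_del hqp]

lemma rowChain_del {p : Fin N} (as : List (Fin n)) (s : Fin N) :
    ∀ (ps : List (Fin N)), p ∉ ps → ∀ (F : U n N),
      rowChain as ps (fun km => if km.1 p = s then F km else 0) =
        fun km => if km.1 p = s then rowChain as ps F km else 0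
  | [], _, F => rfl
  | q :: ps, hp, F => by
    have hqp : q ≠ p := fun h => hp (h ▸ (List.mem_cons_self (a := q) (l := ps)))
    have hp' : p ∉ ps := fun h => hp (List.mem_cons_of_mem q h)
    simp only [rowChain]
    rw [rowChain_del as s ps hp' F, rowOp_del hqp]

lemma Fq_sum (q : Fin N) (w : R n) (b : Fin n)
    (c : Equiv.Perm (Fin N) → R n) (G : Equiv.Perm (Fin N) → U n N) :
    Fq q w b (fun km => ∑ σ : Equiv.Perm (Fin N), c σ * G σ km) =
      fun km => ∑ σ : Equiv.Perm (Fin N), c σ * Fq q w b (G σ) km := by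
  funext km
  simp only [Fq, Pq, Finset.mul_sum, mul_add, ← Finset.sum_add_distrib]
  refine Finset.sum_congr rfl fun σ _ => ?_
  ring

lemma rowOp_sum (q : Fin N) (w : R n)
    (c : Equiv.Perm (Fin N) → R n) (G : Equiv.Perm (Fin N) → U n N) :
    ∀ as : List (Fin n),
      rowOp q w as (fun km => ∑ σ : Equiv.Perm (Fin N), c σ * G σ km) =
        fun km => ∑ σ : Equiv.Perm (Fin N), c σ * rowOp q w as (G σ) km
  | [] => rfl
  | a :: as => by
    simp only [rowOp]
    rw [rowOp_sum q w c G as, Fq_sum]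

lemma rowChain_sum (as : List (Fin n))
    (c : Equiv.Perm (Fin N) → R n) (G : Equiv.Perm (Fin N) → U n N) :
    ∀ ps : List (Fin N),
      rowChain as ps (fun km => ∑ σ : Equiv.Perm (Fin N), c σ * G σ km) =
        fun km => ∑ σ : Equiv.Perm (Fin N), c σ * rowChain as ps (G σ) km
  | [] => rfl
  | p :: ps => by
    simp only [rowChain]
    rw [rowChain_sum as c G ps, rowOp_sum]

def indF (σ : Equiv.Perm (Fin N)) (ps : List (Fin N)) (v : VV n N) : U n N :=
  fun km => if ∀ p ∈ ps, km.1 p = σ p then v km.2 else 0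

lemma indF_cons (σ : Equiv.Perm (Fin N)) (p : Fin N) (ps : List (Fin N)) (v : VV n N) :
    indF σ (p :: ps) v =
      fun km => if km.1 p = σ p then indF σ ps v km else 0 := by
  funext km
  simp only [indF, List.forall_mem_cons]
  by_cases h1 : km.1 p = σ p
  · by_cases h2 : ∀ q ∈ ps, km.1 q = σ q
    · rw [if_pos ⟨h1, h2⟩, if_pos h1, if_pos h2]
    · rw [if_neg (fun h => h2 h.2), if_pos h1, if_neg h2]
  · rw [if_neg (fun h => h1 h.1), if_neg h1]

lemma indF_unaff {p : Fin N} {ps : List (Fin N)} (hp : p ∉ ps)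
    (σ : Equiv.Perm (Fin N)) (v : VV n N) (k : Fin N → Fin N) (i : Fin N)
    (m : Fin n → Fin N) :
    indF σ ps v (Function.update k p i, m) = indF σ ps v (k, m) := by
  simp only [indF]
  have : (∀ q ∈ ps, Function.update k p i q = σ q) ↔ (∀ q ∈ ps, k q = σ q) := by
    refine forall₂_congr fun q hq => ?_
    rw [Function.update_of_ne (fun h : q = p => hp (h ▸ hq))]
  rw [if_congr this rfl rfl]

lemma bridge (ε : Bool) (σ : Equiv.Perm (Fin N)) :
    ∀ ps : List (Fin N), ps.Nodup → ∀ (v : VV n N) (m : Fin n → Fin N),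
      (ps.foldr (fun p g => entry (Lop ε (wt p)) p (σ p) ∘ g) id) v m =
        rowChain (siteList n ε) ps (indF σ ps v) (id, m)
  | [], _, v, m => by
    simp only [List.foldr_nil, id_eq, rowChain, indF]
    rw [if_pos (by intro p hp; exact absurd hp List.not_mem_nil)]
  | p :: ps, hnd, v, m => by
    have hp : p ∉ ps := (List.nodup_cons.mp hnd).1
    have hnd' : ps.Nodup := (List.nodup_cons.mp hnd).2
    simp only [List.foldr_cons, Function.comp_apply, rowChain, entry]
    rw [lop_eq, rowOp_eval p (wt p)]
    have hfun : (fun x : Fin N × (Fin n → Fin N) =>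
        rowChain (siteList n ε) ps (indF σ (p :: ps) v) (Function.update id p x.1, x.2)) =
        (fun x : Fin N × (Fin n → Fin N) =>
          if x.1 = σ p then
            (ps.foldr (fun q g => entry (Lop ε (wt q)) q (σ q) ∘ g) id) v x.2 else 0) := by
      funext x
      rw [indF_cons, rowChain_del (siteList n ε) (σ p) ps hp]
      simp only [Function.update_self]
      by_cases hx : x.1 = σ p
      · rw [if_pos hx, if_pos hx, rowChain_unaff (siteList n ε) ps hp]
        have hfun2 : (fun km => indF σ ps v (Function.update km.1 p x.1, km.2)) =
            indF σ ps v := by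
          funext km
          exact indF_unaff hp σ v km.1 x.1 km.2
        rw [hfun2, bridge ε σ ps hnd' v x.2]
      · rw [if_neg hx, if_neg hx]
    rw [hfun]
    rfl

/-- The quantum determinant
`Σ_{σ∈S_N} sgn(σ) L^±_{1,σ(1)}(u) ∘ L^±_{2,σ(2)}(u−h) ∘ ⋯ ∘ L^±_{N,σ(N)}(u−(N−1)h)`
as an operator on `V`-valued functions. -/
def qdet {n N : ℕ} (ε : Bool) (v : VV n N) : VV n N :=
  fun m => ∑ σ : Equiv.Perm (Fin N),
    ((Equiv.Perm.sign σ : ℤ) : R n) *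
      ((List.finRange N).foldr
        (fun (p : Fin N) g => entry (Lop ε (uvar - ((p : ℕ) : R n) * hvar)) p (σ p) ∘ g) id) v m

def gstar (v : VV n N) : U n N := fun km =>
  ∑ σ : Equiv.Perm (Fin N),
    ((Equiv.Perm.sign σ : ℤ) : R n) * (if km.1 = ⇑σ then v km.2 else 0)

lemma indF_full (σ : Equiv.Perm (Fin N)) (v : VV n N)
    (km : (Fin N → Fin N) × (Fin n → Fin N)) :
    indF σ (tailList N 0) v km = if km.1 = ⇑σ then v km.2 else 0 := by
  rw [indF, tailList_zero]
  have hiff : (∀ p ∈ List.finRange N, km.1 p = σ p) ↔ km.1 = ⇑σ := by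
    constructor
    · intro h
      funext x
      exact h x (List.mem_finRange x)
    · intro h p _
      rw [h]
  rw [if_congr hiff rfl rfl]

lemma gstar_asym (v : VV n N) : ASym (gstar v) := by
  intro τ k m
  simp only [gstar]
  rw [Finset.mul_sum]
  refine Fintype.sum_equiv (Equiv.mulRight τ⁻¹) _ _ fun σ => ?_
  simp only [Equiv.coe_mulRight]
  have hiff : ((k ∘ ⇑τ) = ⇑σ) ↔ (k = ⇑(σ * τ⁻¹)) := by
    rw [Equiv.Perm.coe_mul]
    constructor
    · intro h
      funext x
      have h2 := congrFun h (τ⁻¹ x)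
      simpa using h2
    · intro h
      subst h
      funext x
      simp
  rw [if_congr hiff rfl rfl]
  have h0 : ((Equiv.Perm.sign τ : ℤ) : R n) * ((Equiv.Perm.sign τ : ℤ) : R n) = 1 := by
    have h := Int.units_mul_self (Equiv.Perm.sign τ)
    have h' : (Equiv.Perm.sign τ : ℤ) * (Equiv.Perm.sign τ : ℤ) = 1 := by
      rw [← Units.val_mul, h, Units.val_one]
    exact_mod_cast h'
  rw [Equiv.Perm.sign_mul, Equiv.Perm.sign_inv, Units.val_mul, Int.cast_mul]
  simp only [Equiv.Perm.coe_mul]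
  by_cases hk : k = ⇑σ ∘ ⇑τ⁻¹
  · simp only [hk, if_true]
    linear_combination (-(((Equiv.Perm.sign σ : ℤ) : R n) * v m)) * h0
  · simp only [hk, if_false]
    linear_combination (-(((Equiv.Perm.sign σ : ℤ) : R n) * 0)) * h0

lemma gstar_id (v : VV n N) (m : Fin n → Fin N) : gstar v (id, m) = v m := by
  rw [gstar]
  rw [Finset.sum_eq_single (1 : Equiv.Perm (Fin N))]
  · rw [if_pos (by rw [Equiv.Perm.coe_one]), Equiv.Perm.sign_one]
    push_cast
    ring
  · intro σ _ hσ
    rw [if_neg, mul_zero]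
    intro h
    exact hσ (Equiv.coe_fn_injective (h.symm.trans (Equiv.Perm.coe_one).symm))
  · intro h
    exact absurd (Finset.mem_univ _) h

/-- the quantum determinant of `L^±(u)` is the scalar operator
`∏_{a=1}^n (u−z_a+h) · ∏_{p=1}^{N−1} ∏_{a=1}^n (u−ph−z_a) · id_V`. -/
theorem statement14 (n N : ℕ) (ε : Bool) (v : VV n N) :
    qdet ε v =
      fun m => ((∏ a : Fin n, (uvar - z a + hvar)) *
        ∏ p ∈ Finset.Ico 1 N, ∏ a : Fin n, (uvar - (p : R n) * hvar - z a)) * v m := by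
  funext m
  rcases Nat.eq_zero_or_pos N with hN | hN
  · subst hN
    rcases Nat.eq_zero_or_pos n with hn | hn
    · subst hn
      simp only [qdet]
      rw [Finset.sum_eq_single (1 : Equiv.Perm (Fin 0))
        (fun σ _ hσ => absurd (Subsingleton.elim σ 1) hσ)
        (fun h => absurd (Finset.mem_univ _) h)]
      rw [Equiv.Perm.sign_one, Finset.Ico_eq_empty (by omega), Finset.prod_empty,
        Finset.univ_eq_empty, Finset.prod_empty]
      push_cast
      show (1 : R 0) * v m = 1 * 1 * v m
      ring
    · exact (m ⟨0, hn⟩).elim0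
  · simp only [qdet]
    have hfr : List.finRange N = tailList N 0 := (tailList_zero N).symm
    rw [hfr]
    have h1 : ∀ σ : Equiv.Perm (Fin N),
        ((tailList N 0).foldr
          (fun (p : Fin N) g => entry (Lop ε (uvar - ((p : ℕ) : R n) * hvar)) p (σ p) ∘ g)
          id) v m
        = rowChain (siteList n ε) (tailList N 0) (indF σ (tailList N 0) v) (id, m) :=
      fun σ => bridge ε σ (tailList N 0) (tailList_nodup N 0) v m
    simp only [h1]
    have h2 : (∑ σ : Equiv.Perm (Fin N), ((Equiv.Perm.sign σ : ℤ) : R n) *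
          rowChain (siteList n ε) (tailList N 0) (indF σ (tailList N 0) v) (id, m))
        = rowChain (siteList n ε) (tailList N 0)
            (fun km => ∑ σ : Equiv.Perm (Fin N), ((Equiv.Perm.sign σ : ℤ) : R n) *
              indF σ (tailList N 0) v km) (id, m) :=
      (congrFun (rowChain_sum (siteList n ε)
        (fun σ => ((Equiv.Perm.sign σ : ℤ) : R n))
        (fun σ => indF σ (tailList N 0) v) (tailList N 0)) (id, m)).symm
    rw [h2]
    have h3 : (fun km : (Fin N → Fin N) × (Fin n → Fin N) =>
        ∑ σ : Equiv.Perm (Fin N), ((Equiv.Perm.sign σ : ℤ) : R n) *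
          indF σ (tailList N 0) v km) = gstar v := by
      funext km
      refine Finset.sum_congr rfl fun σ _ => ?_
      rw [indF_full]
    rw [h3]
    rw [rowChain_eq_colChain (siteList n ε) (tailList N 0) (siteList_nodup n ε)
      (tailList_nodup N 0)]
    have h6 : colChain (tailList N 0) (siteList n ε) (gstar v) (id, m)
        = ((siteList n ε).map (dA N)).prod * gstar v (id, m) :=
      congrFun (colChain_eval hN (gstar_asym v) (siteList n ε)) (id, m)
    rw [h6, gstar_id]
    have h4 : ((siteList n ε).map (dA N)).prod = ∏ a : Fin n, dA N a := by
      cases ε <;>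
        simp [siteList, List.map_reverse, List.prod_reverse, Fin.prod_univ_def]
    have h5 : (∏ a : Fin n, dA N a) =
        (∏ a : Fin n, (uvar - z a + hvar)) *
          ∏ p ∈ Finset.Ico 1 N, ∏ a : Fin n, (uvar - (p : R n) * hvar - z a) := by
      simp only [dA]
      rw [Finset.prod_mul_distrib, Finset.prod_comm]
    rw [h4, h5]

end GRTV
end
end

section
/- Let κ_1,…,κ_n be pairwise distinct. Then the discrete Wronskian factors as W^κ(u) = det(u·1 − C) · ∏_{1≤i<j≤n}(κ_i − κ_j), where C is the trigonometric Calogero–Moser matrix. -/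
open scoped BigOperators

noncomputable section

namespace GRTV

/-- The discrete Wronskian `W^κ(u) = det( κ_i^{n−j} (u − x_i + h(i−j)) )_{i,j=1}^n`
(indices written `0`-based, so the exponent `n−j` becomes `n−1−j`). -/
def Wmat (n : ℕ) (κ x : Fin n → ℂ) (h u : ℂ) : Matrix (Fin n) (Fin n) ℂ :=
  Matrix.of fun i j =>
    κ i ^ (n - 1 - (j : ℕ)) * (u - x i + h * (((i : ℕ) : ℂ) - ((j : ℕ) : ℂ)))

/-- The trigonometric Calogero–Moser matrix `C`. -/
def CM (n : ℕ) (κ x : Fin n → ℂ) (h : ℂ) : Matrix (Fin n) (Fin n) ℂ :=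
  Matrix.of fun i j =>
    if i = j then
      x i - h * (∑ k ∈ Finset.univ.filter (fun k : Fin n => k < i), κ i / (κ i - κ k))
          - h * (∑ k ∈ Finset.univ.filter (fun k : Fin n => i < k), κ k / (κ i - κ k))
    else h * κ i / (κ i - κ j)

/-! ### Auxiliary machinery -/

open Finset Polynomial Matrix

lemma derivative_finset_prod {ι : Type*} [DecidableEq ι] (s : Finset ι) (f : ι → Polynomial ℂ) :
    Polynomial.derivative (∏ i ∈ s, f i) =
      ∑ i ∈ s, (∏ j ∈ s.erase i, f j) * Polynomial.derivative (f i) := by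
  induction s using Finset.induction_on with
  | empty => simp
  | @insert a s ha ih =>
    rw [Finset.prod_insert ha, derivative_mul, ih, Finset.sum_insert ha,
      Finset.erase_insert ha, Finset.mul_sum]
    congr 1
    · exact mul_comm _ _
    refine Finset.sum_congr rfl fun i hi => ?_
    have hne : a ≠ i := fun e => ha (e ▸ hi)
    rw [Finset.erase_insert_of_ne hne, Finset.prod_insert
      (fun hmem => ha (Finset.mem_of_mem_erase hmem)), mul_assoc]

variable {n : ℕ} {κ : Fin n → ℂ}

/-- `dd κ i = ∏_{k ≠ i} (κ i - κ k)`. -/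
def dd (κ : Fin n → ℂ) (i : Fin n) : ℂ := ∏ k ∈ Finset.univ.erase i, (κ i - κ k)

/-- `gg κ i k` is the value at `κ i` of the derivative of the `k`-th Lagrange basis
polynomial for the nodes `κ`. -/
def gg (κ : Fin n → ℂ) (i k : Fin n) : ℂ :=
  Polynomial.eval (κ i) (Polynomial.derivative (Lagrange.basis Finset.univ κ k))

lemma sub_ne (hκ : Function.Injective κ) {i j : Fin n} (hij : i ≠ j) : κ i - κ j ≠ 0 :=
  sub_ne_zero.mpr fun e => hij (hκ e)

lemma dd_ne (hκ : Function.Injective κ) (i : Fin n) : dd κ i ≠ 0 :=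
  Finset.prod_ne_zero_iff.mpr fun k hk => sub_ne hκ (Finset.ne_of_mem_erase hk).symm

lemma deriv_basisDivisor (a b : ℂ) :
    Polynomial.derivative (Lagrange.basisDivisor a b) = Polynomial.C (a - b)⁻¹ := by
  simp [Lagrange.basisDivisor, derivative_C_mul]

lemma gg_diag (hκ : Function.Injective κ) (i : Fin n) :
    gg κ i i = ∑ b ∈ Finset.univ.erase i, (κ i - κ b)⁻¹ := by
  unfold gg
  rw [Lagrange.basis, derivative_finset_prod, Polynomial.eval_finset_sum]
  refine Finset.sum_congr rfl fun b hb => ?_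
  rw [Polynomial.eval_mul, deriv_basisDivisor, Polynomial.eval_C, Polynomial.eval_prod]
  rw [Finset.prod_congr rfl (fun a ha => Lagrange.eval_basisDivisor_left_of_ne
    (hκ.ne (Finset.ne_of_mem_erase (Finset.mem_of_mem_erase ha)).symm)),
    Finset.prod_const_one, one_mul]

lemma gg_off (hκ : Function.Injective κ) {i j : Fin n} (hij : i ≠ j) :
    gg κ i j * dd κ j = dd κ i * (κ i - κ j)⁻¹ := by
  unfold gg
  rw [Lagrange.basis, derivative_finset_prod, Polynomial.eval_finset_sum]
  have hmem : i ∈ Finset.univ.erase j := Finset.mem_erase.mpr ⟨hij, Finset.mem_univ i⟩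
  rw [Finset.sum_eq_single_of_mem i hmem (fun b hb hbi => ?_)]
  · -- main term
    rw [Polynomial.eval_mul, deriv_basisDivisor, Polynomial.eval_C, Polynomial.eval_prod]
    have hsplit : dd κ j = (κ j - κ i) * ∏ a ∈ (Finset.univ.erase j).erase i, (κ j - κ a) := by
      rw [dd, ← Finset.mul_prod_erase _ _ hmem]
    have hsplit' : dd κ i = (κ i - κ j) * ∏ a ∈ (Finset.univ.erase j).erase i, (κ i - κ a) := by
      rw [dd, ← Finset.mul_prod_erase _ (fun k => κ i - κ k)
        (Finset.mem_erase.mpr ⟨hij.symm, Finset.mem_univ j⟩), Finset.erase_right_comm]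
    rw [hsplit, hsplit']
    have h1 : ∀ a ∈ (Finset.univ.erase j).erase i,
        Polynomial.eval (κ i) (Lagrange.basisDivisor (κ j) (κ a))
          = (κ j - κ a)⁻¹ * (κ i - κ a) := by
      intro a ha
      simp [Lagrange.basisDivisor]
    rw [Finset.prod_congr rfl h1, Finset.prod_mul_distrib, Finset.prod_inv_distrib]
    have hA : (∏ a ∈ (Finset.univ.erase j).erase i, (κ j - κ a)) ≠ 0 :=
      Finset.prod_ne_zero_iff.mpr fun a ha =>
        sub_ne hκ (Finset.ne_of_mem_erase (Finset.mem_of_mem_erase ha)).symm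
    have hB : κ j - κ i ≠ 0 := sub_ne hκ hij.symm
    have hC : κ i - κ j ≠ 0 := sub_ne hκ hij
    have a1 := mul_inv_cancel₀ hA
    have a2 := mul_inv_cancel₀ hB
    have a3 := mul_inv_cancel₀ hC
    set P := ∏ a ∈ (Finset.univ.erase j).erase i, (κ j - κ a) with hP
    set Q := ∏ a ∈ (Finset.univ.erase j).erase i, (κ i - κ a) with hQ
    linear_combination Q * (κ j - κ i)⁻¹ * (κ j - κ i) * a1 + Q * a2 - Q * a3
  · -- other terms vanish
    rw [Polynomial.eval_mul, Polynomial.eval_prod]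
    have hbmem : i ∈ ((Finset.univ.erase j).erase b) :=
      Finset.mem_erase.mpr ⟨(Ne.symm hbi), hmem⟩
    rw [Finset.prod_eq_zero hbmem (by simp [Lagrange.basisDivisor]), zero_mul]

lemma sum_gg (hκ : Function.Injective κ) (i : Fin n) {m : ℕ} (hm : m < n) :
    κ i * ∑ k, κ k ^ m * gg κ i k = m * κ i ^ m := by
  have hvs : Set.InjOn κ ↑(Finset.univ : Finset (Fin n)) := hκ.injOn
  have hdeg : ((X : Polynomial ℂ) ^ m).degree < (Finset.univ : Finset (Fin n)).card := by
    rw [Polynomial.degree_X_pow]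
    simpa using (WithBot.coe_lt_coe.mpr hm : ((m : ℕ) : WithBot ℕ) < n)
  have hinterp := Lagrange.eq_interpolate hvs hdeg
  have hfun : (fun k => Polynomial.eval (κ k) ((X : Polynomial ℂ) ^ m)) = fun k => κ k ^ m := by
    funext k; simp
  rw [hfun] at hinterp
  have hd := congrArg Polynomial.derivative hinterp
  rw [Lagrange.interpolate_apply] at hd
  rw [map_sum] at hd
  have hd2 := congrArg (Polynomial.eval (κ i)) hd
  rw [Polynomial.derivative_X_pow, Polynomial.eval_mul, Polynomial.eval_C,
    Polynomial.eval_pow, Polynomial.eval_X, Polynomial.eval_finset_sum] at hd2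
  have hsum : ∑ k, κ k ^ m * gg κ i k = (m : ℂ) * κ i ^ (m - 1) := by
    rw [hd2]
    refine Finset.sum_congr rfl fun k _ => ?_
    rw [derivative_C_mul, Polynomial.eval_mul, Polynomial.eval_C]
    rfl
  rw [hsum]
  rcases Nat.eq_zero_or_pos m with hm0 | hm0
  · subst hm0; simp
  · rw [mul_left_comm, ← pow_succ', Nat.sub_add_cancel hm0]

/-- The (reversed) Vandermonde matrix `V i j = κ i ^ (n-1-j)`. -/
def Vmat (n : ℕ) (κ : Fin n → ℂ) : Matrix (Fin n) (Fin n) ℂ :=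
  Matrix.of fun i j => κ i ^ (n - 1 - (j : ℕ))

/-- The matrix `G` satisfying `W = (u•1 - G) V`. -/
def Gmat (n : ℕ) (κ x : Fin n → ℂ) (h : ℂ) : Matrix (Fin n) (Fin n) ℂ :=
  Matrix.of fun i k =>
    (if i = k then x i - h * ((i : ℕ) : ℂ) + h * (((n - 1 : ℕ) : ℕ) : ℂ) else 0)
      - h * κ i * gg κ i k

lemma factorization (κ x : Fin n → ℂ) (h u : ℂ) (hκ : Function.Injective κ) :
    Wmat n κ x h u = (u • (1 : Matrix (Fin n) (Fin n) ℂ) - Gmat n κ x h) * Vmat n κ := by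
  ext i j
  rw [Matrix.mul_apply]
  set m := n - 1 - (j : ℕ) with hmdef
  have hj := j.isLt
  have hm : m < n := by omega
  have step : ∀ k : Fin n, (u • (1 : Matrix (Fin n) (Fin n) ℂ) - Gmat n κ x h) i k
      * Vmat n κ k j
      = (if i = k then u * κ i ^ m else 0)
        - ((if i = k then (x i - h * ((i : ℕ) : ℂ) + h * (((n - 1 : ℕ) : ℕ) : ℂ)) * κ i ^ m else 0)
          - h * (κ i * (κ k ^ m * gg κ i k))) := by
    intro k
    simp only [Matrix.sub_apply, Matrix.smul_apply, Matrix.one_apply, Gmat, Vmat,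
      Matrix.of_apply, smul_eq_mul]
    by_cases hik : i = k <;> simp [hik] <;> ring
  rw [Finset.sum_congr rfl (fun k _ => step k), Finset.sum_sub_distrib,
    Finset.sum_sub_distrib, Finset.sum_ite_eq Finset.univ i
      (fun k => u * κ i ^ m), Finset.sum_ite_eq Finset.univ i
      (fun k => (x i - h * ((i : ℕ) : ℂ) + h * (((n - 1 : ℕ) : ℕ) : ℂ)) * κ i ^ m),
    ← Finset.mul_sum, ← Finset.mul_sum, sum_gg hκ i hm]
  simp only [Finset.mem_univ, if_true, Wmat, Matrix.of_apply, ← hmdef]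
  have hcast : ((m : ℕ) : ℂ) = ((n - 1 : ℕ) : ℂ) - ((j : ℕ) : ℂ) := by
    rw [hmdef]
    push_cast [Nat.cast_sub (by omega : (j : ℕ) ≤ n - 1)]
    ring
  rw [hcast]
  ring

lemma prod_pairs (F : Fin n → Fin n → ℂ) :
    ∏ p ∈ Finset.univ.filter (fun p : Fin n × Fin n => p.1 < p.2), F p.1 p.2
      = ∏ i, ∏ j ∈ Finset.Ioi i, F i j := by
  rw [Finset.prod_filter, Fintype.prod_prod_type]
  refine Finset.prod_congr rfl fun i _ => ?_
  rw [← Finset.prod_filter]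
  congr 1
  ext j
  simp [Finset.mem_Ioi]

lemma det_Vmat (κ : Fin n → ℂ) :
    (Vmat n κ).det
      = ∏ p ∈ Finset.univ.filter (fun p : Fin n × Fin n => p.1 < p.2), (κ p.1 - κ p.2) := by
  have h1 : Vmat n κ =
      ((Matrix.vandermonde (fun i => κ (Fin.rev i))).submatrix Fin.revPerm Fin.revPerm) := by
    ext i j
    simp only [Vmat, Matrix.of_apply, Matrix.submatrix_apply, Matrix.vandermonde_apply,
      Fin.revPerm_apply, Fin.rev_rev, Fin.val_rev]
    congr 1
    omega
  rw [h1, Matrix.det_submatrix_equiv_self, Matrix.det_vandermonde,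
    ← prod_pairs (fun a b => κ (Fin.rev b) - κ (Fin.rev a))]
  refine Finset.prod_nbij' (fun p => (Fin.rev p.2, Fin.rev p.1))
    (fun p => (Fin.rev p.2, Fin.rev p.1)) ?_ ?_ ?_ ?_ ?_
  · intro p hp
    simp only [Finset.mem_filter, Finset.mem_univ, true_and] at hp ⊢
    exact Fin.rev_lt_rev.mpr hp
  · intro p hp
    simp only [Finset.mem_filter, Finset.mem_univ, true_and] at hp ⊢
    exact Fin.rev_lt_rev.mpr hp
  · intro p _; simp [Fin.rev_rev]
  · intro p _; simp [Fin.rev_rev]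
  · intro p _; rfl

lemma diag_eq (hκ : Function.Injective κ) (x : Fin n → ℂ) (h : ℂ) (i : Fin n) :
    Gmat n κ x h i i = CM n κ x h i i := by
  have hlt : Finset.univ.filter (fun k : Fin n => k < i) = Finset.Iio i := by ext k; simp
  have hgt : Finset.univ.filter (fun k : Fin n => i < k) = Finset.Ioi i := by ext k; simp
  have herase : Finset.univ.erase i = Finset.Iio i ∪ Finset.Ioi i := by
    ext k
    simp only [Finset.mem_erase, Finset.mem_univ, and_true, Finset.mem_union,
      Finset.mem_Iio, Finset.mem_Ioi]
    exact ne_iff_lt_or_gt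
  have hdisj : Disjoint (Finset.Iio i) (Finset.Ioi i) :=
    Finset.disjoint_left.mpr fun k hk hk' =>
      absurd (Finset.mem_Ioi.mp hk') (not_lt.mpr (le_of_lt (Finset.mem_Iio.mp hk)))
  have e1 : κ i * ∑ b ∈ Finset.Iio i, (κ i - κ b)⁻¹
      = ∑ k ∈ Finset.Iio i, κ i / (κ i - κ k) := by
    rw [Finset.mul_sum]
    exact Finset.sum_congr rfl fun b hb => (div_eq_mul_inv _ _).symm
  have e2 : κ i * ∑ b ∈ Finset.Ioi i, (κ i - κ b)⁻¹
      = (((n - 1 : ℕ) : ℂ) - ((i : ℕ) : ℂ)) + ∑ k ∈ Finset.Ioi i, κ k / (κ i - κ k) := by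
    rw [Finset.mul_sum]
    have hterm : ∀ b ∈ Finset.Ioi i, κ i * (κ i - κ b)⁻¹ = 1 + κ b / (κ i - κ b) := by
      intro b hb
      have hne : κ i - κ b ≠ 0 := sub_ne hκ (ne_of_lt (Finset.mem_Ioi.mp hb))
      field_simp
      ring
    rw [Finset.sum_congr rfl hterm, Finset.sum_add_distrib, Finset.sum_const, nsmul_eq_mul,
      mul_one, Fin.card_Ioi]
    congr 1
    have : (i : ℕ) ≤ n - 1 := by omega
    push_cast [Nat.cast_sub this]
    ring
  unfold Gmat CM
  simp only [Matrix.of_apply, eq_self_iff_true, if_true]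
  rw [gg_diag hκ, herase, Finset.sum_union hdisj, hlt, hgt]
  linear_combination (-h) * e1 + (-h) * e2

lemma star (hκ : Function.Injective κ) (x : Fin n → ℂ) (h : ℂ) (i j : Fin n) :
    Gmat n κ x h i j * (dd κ j * κ j) = (dd κ i * κ i) * CM n κ x h j i := by
  by_cases hij : i = j
  · subst hij
    rw [diag_eq hκ]
    ring
  · have hg := gg_off hκ hij
    have hinv : (κ j - κ i)⁻¹ = -(κ i - κ j)⁻¹ := by
      rw [← neg_sub, inv_neg]
    unfold Gmat CM
    simp only [Matrix.of_apply, if_neg hij, if_neg (Ne.symm hij)]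
    rw [div_eq_mul_inv, hinv]
    linear_combination (-(h * κ i * κ j)) * hg

lemma det_conj {ι : Type*} [Fintype ι] [DecidableEq ι] (P Q : Matrix ι ι ℂ) (e : ι → ℂ)
    (he : ∀ i, e i ≠ 0) (hrel : ∀ i j, P i j * e j = e i * Q j i) (u : ℂ) :
    (u • (1 : Matrix ι ι ℂ) - P).det = (u • (1 : Matrix ι ι ℂ) - Q).det := by
  have hM : (u • (1 : Matrix ι ι ℂ) - P) * Matrix.diagonal e
      = Matrix.diagonal e * (u • (1 : Matrix ι ι ℂ) - Qᵀ) := by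
    ext i j
    rw [Matrix.mul_diagonal, Matrix.diagonal_mul]
    simp only [Matrix.sub_apply, Matrix.smul_apply, Matrix.one_apply, Matrix.transpose_apply,
      smul_eq_mul]
    by_cases hij : i = j
    · subst hij
      simp only [if_pos rfl]
      linear_combination -(hrel i i)
    · simp only [if_neg hij]
      linear_combination -(hrel i j)
  have hdet := congrArg Matrix.det hM
  rw [Matrix.det_mul, Matrix.det_mul, Matrix.det_diagonal] at hdet
  have hT : u • (1 : Matrix ι ι ℂ) - Qᵀ = (u • (1 : Matrix ι ι ℂ) - Q)ᵀ := by
    rw [Matrix.transpose_sub, Matrix.transpose_smul, Matrix.transpose_one]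
  rw [hT, Matrix.det_transpose] at hdet
  exact mul_left_cancel₀ (Finset.prod_ne_zero_iff.mpr fun i _ => he i)
    (by rw [← hdet]; ring)

lemma submatrix_smul_one_sub {m k : ℕ} (M : Matrix (Fin m) (Fin m) ℂ) (u : ℂ)
    (f : Fin k → Fin m) (hf : Function.Injective f) :
    (u • (1 : Matrix (Fin m) (Fin m) ℂ) - M).submatrix f f
      = u • (1 : Matrix (Fin k) (Fin k) ℂ) - M.submatrix f f := by
  ext a b
  simp only [Matrix.submatrix_apply, Matrix.sub_apply, Matrix.smul_apply, Matrix.one_apply,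
    smul_eq_mul, hf.eq_iff]

lemma step3_succ {n' : ℕ} (κ x : Fin (n' + 1) → ℂ) (h u : ℂ)
    (hκ : Function.Injective κ) (i0 : Fin (n' + 1)) (hi0 : κ i0 = 0) :
    (u • (1 : Matrix (Fin (n' + 1)) (Fin (n' + 1)) ℂ) - Gmat (n' + 1) κ x h).det
      = (u • (1 : Matrix (Fin (n' + 1)) (Fin (n' + 1)) ℂ) - CM (n' + 1) κ x h).det := by
  set A := u • (1 : Matrix (Fin (n' + 1)) (Fin (n' + 1)) ℂ) - Gmat (n' + 1) κ x h with hA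
  set B := u • (1 : Matrix (Fin (n' + 1)) (Fin (n' + 1)) ℂ) - CM (n' + 1) κ x h with hB
  have hArow : ∀ j, j ≠ i0 → A i0 j = 0 := by
    intro j hj
    simp only [hA, Matrix.sub_apply, Matrix.smul_apply, Matrix.one_apply,
      if_neg (Ne.symm hj ∘ Eq.symm), Gmat, Matrix.of_apply, smul_eq_mul, mul_zero,
      if_neg (fun e : i0 = j => hj e.symm), hi0]
    ring
  have hBrow : ∀ j, j ≠ i0 → B i0 j = 0 := by
    intro j hj
    simp only [hB, Matrix.sub_apply, Matrix.smul_apply, Matrix.one_apply, CM, Matrix.of_apply,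
      if_neg (fun e : i0 = j => hj e.symm), hi0, smul_eq_mul]
    ring
  have hdiag : A i0 i0 = B i0 i0 := by
    simp only [hA, hB, Matrix.sub_apply, diag_eq hκ x h i0]
  have hminor : (A.submatrix i0.succAbove i0.succAbove).det
      = (B.submatrix i0.succAbove i0.succAbove).det := by
    have hfinj : Function.Injective i0.succAbove := Fin.succAbove_right_injective
    rw [hA, hB, submatrix_smul_one_sub _ _ _ hfinj, submatrix_smul_one_sub _ _ _ hfinj]
    refine det_conj _ _ (fun a => dd κ (i0.succAbove a) * κ (i0.succAbove a)) ?_ ?_ u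
    · intro a
      refine mul_ne_zero (dd_ne hκ _) fun hz => ?_
      exact Fin.succAbove_ne i0 a (hκ (hz.trans hi0.symm))
    · intro a b
      exact star hκ x h (i0.succAbove a) (i0.succAbove b)
  rw [Matrix.det_succ_row A i0, Matrix.det_succ_row B i0,
    Finset.sum_eq_single_of_mem i0 (Finset.mem_univ i0)
      (fun j _ hj => by rw [hArow j hj]; ring),
    Finset.sum_eq_single_of_mem i0 (Finset.mem_univ i0)
      (fun j _ hj => by rw [hBrow j hj]; ring),
    hdiag, hminor]

lemma step3 (n : ℕ) (κ x : Fin n → ℂ) (h u : ℂ) (hκ : Function.Injective κ) :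
    (u • (1 : Matrix (Fin n) (Fin n) ℂ) - Gmat n κ x h).det
      = (u • (1 : Matrix (Fin n) (Fin n) ℂ) - CM n κ x h).det := by
  by_cases hz : ∀ i, κ i ≠ 0
  · exact det_conj _ _ (fun i => dd κ i * κ i)
      (fun i => mul_ne_zero (dd_ne hκ i) (hz i)) (star hκ x h) u
  · push_neg at hz
    obtain ⟨i0, hi0⟩ := hz
    have hn : n ≠ 0 := fun e => (e ▸ i0).elim0
    obtain ⟨n', rfl⟩ : ∃ n', n = n' + 1 := ⟨n - 1, by omega⟩
    exact step3_succ κ x h u hκ i0 hi0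

/-- for pairwise distinct `κ_1,…,κ_n`,
`W^κ(u) = det(u·1 − C) · ∏_{i<j} (κ_i − κ_j)`. -/
theorem statement17 (n : ℕ) (κ x : Fin n → ℂ) (h u : ℂ)
    (hκ : Function.Injective κ) :
    (Wmat n κ x h u).det =
      (u • (1 : Matrix (Fin n) (Fin n) ℂ) - CM n κ x h).det *
        ∏ p ∈ Finset.univ.filter (fun p : Fin n × Fin n => p.1 < p.2), (κ p.1 - κ p.2) := by
  rw [factorization κ x h u hκ, Matrix.det_mul, det_Vmat κ, step3 n κ x h u hκ]

end GRTV
end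
end
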